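/- Let A be an n×n real matrix, and set A₁₁ = (A − Aᵀ)/2 and A₁₂ = (A + Aᵀ)/2. Then the 2n×2n block matrix H = [[A₁₁, A₁₂],[A₁₂, A₁₁]] is a real Hamiltonian matrix whose characteristic polynomial over ℂ equals charpoly(A)·charpoly(−A); in particular, if Λ is the multiset of complex eigenvalues of A, then the multiset of complex eigenvalues of H is Λ ∪ (−Λ), so Λ ∪ (−Λ) is H-realizable. -/

import Mathlib

open Matrix Polynomial

lemma myEvalCharpoly {m R : Type*} [Fintype m] [DecidableEq m] [CommRing R]
    (N : Matrix m m R) (x : R) :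
    (N.charpoly).eval x = ((Matrix.scalar m x) - N).det := by
  rw [Matrix.charpoly, ← Polynomial.coe_evalRingHom, RingHom.map_det]
  congr 1
  ext i j
  by_cases h : i = j
  · subst h; simp [Matrix.charmatrix_apply_eq, Matrix.scalar_apply]
  · simp [Matrix.charmatrix_apply_ne _ _ _ h, Matrix.scalar_apply,
      Matrix.diagonal_apply_ne _ h]

lemma myCharpolyTranspose {m R : Type*} [Fintype m] [DecidableEq m] [CommRing R]
    (N : Matrix m m R) : (Nᵀ).charpoly = N.charpoly := by
  rw [Matrix.charpoly, Matrix.charpoly, ← Matrix.det_transpose (Matrix.charmatrix N)]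
  congr 1
  ext i j
  by_cases h : i = j
  · subst h; simp
  · simp [Matrix.charmatrix_apply_ne _ _ _ h, Matrix.charmatrix_apply_ne _ _ _ (Ne.symm h),
      Matrix.transpose_apply]

lemma myDetFromBlocks {m R : Type*} [Fintype m] [DecidableEq m] [CommRing R] [IsDomain R]
    (h2 : (2 : R) ≠ 0) (P Q : Matrix m m R) :
    (Matrix.fromBlocks P Q Q P).det = (P + Q).det * (P - Q).det := by
  set S : Matrix (m ⊕ m) (m ⊕ m) R := Matrix.fromBlocks 1 1 1 (-1) with hS
  have hmul : Matrix.fromBlocks P Q Q P * S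
      = S * Matrix.fromBlocks (P + Q) 0 0 (P - Q) := by
    simp only [hS, Matrix.fromBlocks_multiply]
    rw [Matrix.fromBlocks_inj]
    refine ⟨by simp, by simp; abel, by simp; abel, by simp; abel⟩
  have hdiag : (2 : Matrix m m R) = Matrix.diagonal (fun _ => (2 : R)) := by
    rw [show (2 : Matrix m m R) = 1 + 1 from by norm_num]
    ext i j
    by_cases h : i = j
    · subst h; simp; norm_num
    · simp [Matrix.diagonal_apply_ne _ h, Matrix.one_apply_ne h]
  have hSS : S * S = Matrix.fromBlocks 2 0 0 2 := by
    simp only [hS, Matrix.fromBlocks_multiply]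
    norm_num
  have hdetS : S.det ≠ 0 := by
    intro h
    have h0 : (S * S).det = 0 := by rw [Matrix.det_mul, h, mul_zero]
    rw [hSS, Matrix.det_fromBlocks_zero₂₁, hdiag, Matrix.det_diagonal] at h0
    simp only [Finset.prod_const] at h0
    rcases mul_eq_zero.mp h0 with h' | h' <;> exact pow_ne_zero _ h2 h'
  have := congrArg Matrix.det hmul
  rw [Matrix.det_mul, Matrix.det_mul, Matrix.det_fromBlocks_zero₂₁] at this
  rw [mul_comm] at this
  exact mul_left_cancel₀ hdetS this

/-- The standard symplectic matrix `J_n = [[0, I_n], [-I_n, 0]]`. -/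
def symplJ (n : ℕ) : Matrix (Fin n ⊕ Fin n) (Fin n ⊕ Fin n) ℝ :=
  Matrix.fromBlocks 0 1 (-1) 0

/-- A `2n × 2n` real matrix `A` is Hamiltonian if `Aᵀ J_n + J_n A = 0`. -/
def IsHamiltonian {n : ℕ} (A : Matrix (Fin n ⊕ Fin n) (Fin n ⊕ Fin n) ℝ) : Prop :=
  Aᵀ * symplJ n + symplJ n * A = 0

/-- For a real `n × n` matrix `A`, with `A₁₁ = (A - Aᵀ)/2` and `A₁₂ = (A + Aᵀ)/2`,
the block matrix `H = [[A₁₁, A₁₂], [A₁₂, A₁₁]]` is Hamiltonian, its characteristic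
polynomial over `ℂ` is `charpoly(A) * charpoly(-A)`, and its complex eigenvalue
multiset is `Λ ∪ (-Λ)`, where `Λ` is the eigenvalue multiset of `A`;
hence `Λ ∪ (-Λ)` is H-realizable. -/
theorem union_neg_spectrum_hamiltonian_realizable {n : ℕ}
    (A A₁₁ A₁₂ : Matrix (Fin n) (Fin n) ℝ)
    (h₁₁ : A₁₁ = (1 / 2 : ℝ) • (A - Aᵀ)) (h₁₂ : A₁₂ = (1 / 2 : ℝ) • (A + Aᵀ)) :
    IsHamiltonian (Matrix.fromBlocks A₁₁ A₁₂ A₁₂ A₁₁) ∧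
    ((Matrix.fromBlocks A₁₁ A₁₂ A₁₂ A₁₁).map Complex.ofReal).charpoly
      = (A.map Complex.ofReal).charpoly * ((-A).map Complex.ofReal).charpoly ∧
    ((Matrix.fromBlocks A₁₁ A₁₂ A₁₂ A₁₁).map Complex.ofReal).charpoly.roots
      = (A.map Complex.ofReal).charpoly.roots
        + ((A.map Complex.ofReal).charpoly.roots).map (fun z => -z) := by
  have ht11 : A₁₁ᵀ = -A₁₁ := by
    rw [h₁₁, Matrix.transpose_smul, Matrix.transpose_sub, Matrix.transpose_transpose,
      ← smul_neg, neg_sub]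
  have ht12 : A₁₂ᵀ = A₁₂ := by
    rw [h₁₂, Matrix.transpose_smul, Matrix.transpose_add, Matrix.transpose_transpose,
      add_comm]
  have hsum : A₁₁ + A₁₂ = A := by
    rw [h₁₁, h₁₂, ← smul_add]
    rw [show A - Aᵀ + (A + Aᵀ) = (2 : ℝ) • A from by rw [two_smul]; abel]
    rw [smul_smul]; norm_num
  have hdiff : A₁₁ - A₁₂ = -Aᵀ := by
    rw [h₁₁, h₁₂, ← smul_sub]
    rw [show A - Aᵀ - (A + Aᵀ) = (2 : ℝ) • (-Aᵀ) from by rw [two_smul]; abel]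
    rw [smul_smul]; norm_num
  set M : Matrix (Fin n) (Fin n) ℂ := A.map Complex.ofReal with hM
  set B : Matrix (Fin n) (Fin n) ℂ := A₁₁.map Complex.ofReal with hB
  set C' : Matrix (Fin n) (Fin n) ℂ := A₁₂.map Complex.ofReal with hC
  have hmapsum : B + C' = M := by
    ext i j
    have h := congrFun (congrFun hsum i) j
    simp only [Matrix.add_apply] at h
    simp only [hB, hC, hM, Matrix.add_apply, Matrix.map_apply]
    rw [← Complex.ofReal_add, h]
  have hmapdiff : B - C' = -Mᵀ := by
    ext i j
    have h := congrFun (congrFun hdiff i) j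
    simp only [Matrix.sub_apply, Matrix.neg_apply, Matrix.transpose_apply] at h
    simp only [hB, hC, hM, Matrix.sub_apply, Matrix.neg_apply, Matrix.transpose_apply,
      Matrix.map_apply]
    rw [← Complex.ofReal_sub, h, Complex.ofReal_neg]
  have hneg : (-A).map Complex.ofReal = -M := by
    ext i j; simp [hM]
  -- characteristic polynomial identity
  have hchar : ((Matrix.fromBlocks A₁₁ A₁₂ A₁₂ A₁₁).map Complex.ofReal).charpoly
      = M.charpoly * (-M).charpoly := by
    rw [show (Matrix.fromBlocks A₁₁ A₁₂ A₁₂ A₁₁).map Complex.ofReal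
        = Matrix.fromBlocks B C' C' B from by rw [Matrix.fromBlocks_map]]
    rw [Matrix.charpoly, Matrix.charmatrix_fromBlocks,
      myDetFromBlocks (by norm_num) _ _]
    have e1 : Matrix.charmatrix B + -(C'.map Polynomial.C)
        = Matrix.charmatrix (B + C') := by
      ext i j
      by_cases h : i = j
      · subst h; simp [Matrix.charmatrix_apply_eq]; ring
      · simp [Matrix.charmatrix_apply_ne _ _ _ h]; ring
    have e2 : Matrix.charmatrix B - -(C'.map Polynomial.C)
        = Matrix.charmatrix (B - C') := by
      ext i j
      by_cases h : i = j
      · subst h; simp [Matrix.charmatrix_apply_eq]; ring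
      · simp [Matrix.charmatrix_apply_ne _ _ _ h]; ring
    rw [e1, e2, hmapsum, hmapdiff,
      show -Mᵀ = (-M)ᵀ from (Matrix.transpose_neg M).symm]
    rw [show (Matrix.charmatrix M).det = M.charpoly from rfl,
      show (Matrix.charmatrix ((-M)ᵀ)).det = ((-M)ᵀ).charpoly from rfl,
      myCharpolyTranspose]
  -- roots
  have hp : M.charpoly.Monic := Matrix.charpoly_monic M
  have hqm : (-M).charpoly.Monic := Matrix.charpoly_monic (-M)
  have hsplit : Splits M.charpoly :=
    Polynomial.splits_iff_card_roots.mpr IsAlgClosed.card_roots_eq_natDegree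
  have hcard : Multiset.card M.charpoly.roots = n := by
    rw [(Polynomial.splits_iff_card_roots).mp hsplit,
      Matrix.charpoly_natDegree_eq_dim, Fintype.card_fin]
  have hfact : M.charpoly = (M.charpoly.roots.map fun a => X - Polynomial.C a).prod :=
    hsplit.eq_prod_roots_of_monic hp
  have hq : (-M).charpoly
      = ((M.charpoly.roots.map (fun z => -z)).map fun a => X - Polynomial.C a).prod := by
    apply Polynomial.funext
    intro x
    rw [myEvalCharpoly, Polynomial.eval_multiset_prod, Multiset.map_map, Multiset.map_map]
    simp only [Function.comp, Polynomial.eval_sub, Polynomial.eval_X, Polynomial.eval_C,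
      sub_neg_eq_add]
    have heval : (M.charpoly.roots.map (fun z => -x - z)).prod = M.charpoly.eval (-x) := by
      conv_rhs => rw [hfact]
      rw [Polynomial.eval_multiset_prod, Multiset.map_map]
      simp only [Function.comp, Polynomial.eval_sub, Polynomial.eval_X, Polynomial.eval_C]
    have hprod : (M.charpoly.roots.map (fun z => x + z)).prod
        = (-1 : ℂ) ^ n * (M.charpoly.roots.map (fun z => -x - z)).prod := by
      rw [show (fun z : ℂ => x + z) = fun z : ℂ => (-1) * (-x - z) from by funext z; ring]
      rw [show (fun z : ℂ => (-1 : ℂ) * (-x - z)) = fun z : ℂ =>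
        (fun _ : ℂ => (-1 : ℂ)) z * (fun w : ℂ => -x - w) z from rfl]
      rw [Multiset.prod_map_mul, Multiset.map_const', Multiset.prod_replicate, hcard]
    rw [hprod, heval, myEvalCharpoly]
    have hscal : Matrix.scalar (Fin n) (-x) - M = -(Matrix.scalar (Fin n) x - -M) := by
      rw [map_neg]; abel
    rw [hscal, Matrix.det_neg, Fintype.card_fin, sub_neg_eq_add, ← mul_assoc, ← pow_add,
      ← two_mul, pow_mul]
    norm_num
  refine ⟨?_, ?_, ?_⟩
  · unfold IsHamiltonian symplJ
    rw [Matrix.fromBlocks_transpose, ht11, ht12, Matrix.fromBlocks_multiply,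
      Matrix.fromBlocks_multiply, Matrix.fromBlocks_add,
      show (0 : Matrix (Fin n ⊕ Fin n) (Fin n ⊕ Fin n) ℝ)
        = Matrix.fromBlocks 0 0 0 0 from by simp,
      Matrix.fromBlocks_inj]
    refine ⟨by simp, by simp, by simp, by simp⟩
  · rw [hchar, hneg]
  · rw [hchar, Polynomial.roots_mul (hp.mul hqm).ne_zero, hq,
      Polynomial.roots_multiset_prod_X_sub_C]
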